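/- Let d ≥ 1, a > 0, and ρ(z) = exp(−a|z|²); this ρ satisfies conditions (I) and (II). Then the monomials are orthogonal for the associated pairing: ⟨z^n, z^m⟩ = 0 for n ≠ m, and ⟨z^n, z^n⟩ = s(n)·π·n!/a^{n+1}, where s: ℕ → {±1} is the sign sequence determined by s(n) = (−1)^n for 0 ≤ n ≤ d−1 and s(n+d) = −s(n) for all n ≥ 0. -/

import Mathlib

open MeasureTheory Polynomial Complex

/-- The weight-`ℓ` component (mod `d`) of a polynomial: the sum of its monomials
whose degree is congruent to `ℓ` mod `d`. -/
noncomputable def weightComp (d ℓ : ℕ) (f : Polynomial ℂ) : Polynomial ℂ :=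
  ∑ k ∈ f.support.filter (fun k => k % d = ℓ), Polynomial.monomial k (f.coeff k)

/-- A polynomial has weight `ℓ` (mod `d`) if all its monomials have degree `≡ ℓ [MOD d]`. -/
def HasWeight (d ℓ : ℕ) (f : Polynomial ℂ) : Prop :=
  ∀ k ∈ f.support, k % d = ℓ

/-- `σg(z) = Σ_{ℓ=0}^{d-1} (-ε)^{-ℓ} g_ℓ(ε z)`. -/
noncomputable def sigmaMap (d : ℕ) (ε : ℂ) (g : Polynomial ℂ) (z : ℂ) : ℂ :=
  ∑ ℓ ∈ Finset.range d, (-ε) ^ (-(ℓ : ℤ)) * (weightComp d ℓ g).eval (ε * z)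

/-- The pairing `⟨f,g⟩ = ∫_ℂ f(z) conj(σg(z)) ρ(z) dx dy`. -/
noncomputable def genPairing (d : ℕ) (ε : ℂ) (ρ : ℂ → ℂ) (f g : Polynomial ℂ) : ℂ :=
  ∫ z : ℂ, f.eval z * (starRingEnd ℂ) (sigmaMap d ε g z) * ρ z

/-- Condition (I): `ρ` is measurable and `∫_ℂ |z|^n |ρ(z)| dx dy < ∞` for all `n`. -/
def CondI (ρ : ℂ → ℂ) : Prop :=
  Measurable ρ ∧
  ∀ n : ℕ, MeasureTheory.Integrable (fun z : ℂ => ‖z‖ ^ n * ‖ρ z‖)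

/-- Condition (II): `ρ(ε z) = conj(ρ(z))` for every `ε` with `ε^d = -1`. -/
def CondII (d : ℕ) (ρ : ℂ → ℂ) : Prop :=
  ∀ ε : ℂ, ε ^ d = -1 → ∀ z : ℂ, ρ (ε * z) = (starRingEnd ℂ) (ρ z)

open MeasureTheory Polynomial Complex

lemma s_eq (d : ℕ) (hd : 1 ≤ d) (s : ℕ → ℝ) (hs₁ : ∀ n < d, s n = (-1 : ℝ) ^ n)
    (hs₂ : ∀ n : ℕ, s (n + d) = -s n) :
    ∀ n, s n = (-1 : ℝ) ^ (n % d) * (-1) ^ (n / d) := by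
  intro n
  induction n using Nat.strong_induction_on with
  | _ n ih =>
    rcases lt_or_ge n d with h | h
    · rw [hs₁ n h, Nat.mod_eq_of_lt h, Nat.div_eq_of_lt h, pow_zero, mul_one]
    · obtain ⟨k, rfl⟩ : ∃ k, n = k + d := ⟨n - d, (Nat.sub_add_cancel h).symm⟩
      rw [hs₂ k, ih k (by omega), Nat.add_mod_right, Nat.add_div_right k (by omega), pow_succ]
      ring

lemma abs_eps (d : ℕ) (hd : 1 ≤ d) (ε : ℂ) (hε : ε ^ d = -1) : ‖ε‖ = 1 := by
  have h1 : ‖ε‖ ^ d = 1 := by rw [← norm_pow, hε]; simp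
  have h0 : (0:ℝ) ≤ ‖ε‖ := norm_nonneg _
  rcases lt_trichotomy ‖ε‖ 1 with h | h | h
  · nlinarith [pow_lt_one₀ h0 h (show d ≠ 0 by omega)]
  · exact h
  · nlinarith [one_lt_pow₀ h (show d ≠ 0 by omega)]

lemma sigmaMap_X_pow' (d : ℕ) (hd : 1 ≤ d) (ε : ℂ) (m : ℕ) (z : ℂ) :
    (∑ ℓ ∈ Finset.range d, (-ε) ^ (-(ℓ : ℤ)) *
      ((∑ k ∈ (X ^ m : ℂ[X]).support.filter (fun k => k % d = ℓ),
        Polynomial.monomial k ((X ^ m : ℂ[X]).coeff k)).eval (ε * z)))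
      = (-ε) ^ (-(m % d : ℤ)) * (ε * z) ^ m := by
  have hsupp : (X ^ m : ℂ[X]).support = {m} := Polynomial.support_X_pow m
  have key : ∀ ℓ, (X ^ m : ℂ[X]).support.filter (fun k => k % d = ℓ)
      = if m % d = ℓ then {m} else ∅ := by
    intro ℓ; rw [hsupp]
    split_ifs with h
    · ext x; simp (config := {contextual := true}) [h]
    · ext x
      simp only [Finset.mem_filter, Finset.mem_singleton, Finset.notMem_empty, iff_false, not_and]
      rintro rfl; exact h
  rw [Finset.sum_congr rfl (fun ℓ _ => by rw [key ℓ]),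
    Finset.sum_congr rfl (fun ℓ _ => ?_), Finset.sum_ite_eq (Finset.range d) (m % d)
    (fun ℓ => (-ε) ^ (-(ℓ : ℤ)) * (ε * z) ^ m)]
  · simp [Nat.mod_lt m (show 0 < d by omega)]
  · split_ifs with h <;> simp [Polynomial.coeff_X_pow, Polynomial.eval_monomial]

lemma pow_le_exp_aux (n : ℕ) {b : ℝ} (hb : 0 < b) {r : ℝ} (hr : 0 ≤ r) :
    r ^ n ≤ max 1 ((n.factorial : ℝ) * (b⁻¹) ^ n) * Real.exp (b * r ^ 2) := by
  have hx : (0:ℝ) ≤ b * r ^ 2 := by positivity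
  have hexp1 : (1:ℝ) ≤ Real.exp (b * r ^ 2) := Real.one_le_exp hx
  rcases le_total r 1 with h | h
  · calc r ^ n ≤ 1 := pow_le_one₀ hr h
    _ ≤ max 1 ((n.factorial : ℝ) * (b⁻¹) ^ n) * Real.exp (b * r ^ 2) := by
        nlinarith [le_max_left (1:ℝ) ((n.factorial : ℝ) * (b⁻¹) ^ n)]
  · have hterm : (b * r ^ 2) ^ n / (n.factorial : ℝ) ≤ Real.exp (b * r ^ 2) := by
      refine le_trans ?_ (Real.sum_le_exp_of_nonneg hx (n + 1))
      exact Finset.single_le_sum (f := fun i => (b * r ^ 2) ^ i / (i.factorial : ℝ))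
        (fun i _ => by positivity) (Finset.self_mem_range_succ n)
    have h1 : r ^ n ≤ (r ^ 2) ^ n := by
      rw [← pow_mul]
      exact pow_le_pow_right₀ h (by omega)
    have h2 : (r ^ 2) ^ n = (b⁻¹) ^ n * (b * r ^ 2) ^ n := by
      rw [mul_pow, ← mul_assoc, ← mul_pow, inv_mul_cancel₀ hb.ne', one_pow, one_mul]
    have h3 : (b * r ^ 2) ^ n ≤ (n.factorial : ℝ) * Real.exp (b * r ^ 2) := by
      rw [div_le_iff₀ (by positivity)] at hterm; linarith [hterm]
    calc r ^ n ≤ (b⁻¹) ^ n * (b * r ^ 2) ^ n := by rw [← h2]; exact h1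
    _ ≤ (b⁻¹) ^ n * ((n.factorial : ℝ) * Real.exp (b * r ^ 2)) := by
        exact mul_le_mul_of_nonneg_left h3 (by positivity)
    _ ≤ max 1 ((n.factorial : ℝ) * (b⁻¹) ^ n) * Real.exp (b * r ^ 2) := by
        rw [← mul_assoc]
        gcongr
        rw [mul_comm]; exact le_max_right _ _

lemma gauss_integrable (a : ℝ) (ha : 0 < a) (n : ℕ) :
    Integrable (fun z : ℂ => ‖z‖ ^ n * Real.exp (-a * ‖z‖ ^ 2)) := by
  have h2 : (0:ℝ) < a / 2 := by linarith
  have base : Integrable (fun z : ℂ => Real.exp (-(a/2) * ‖z‖ ^ 2)) := by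
    have := (GaussianFourier.integrable_cexp_neg_mul_sq_norm_add (V := ℂ)
      (b := ((a/2 : ℝ) : ℂ)) (by simpa using h2) 0 0).norm
    refine this.congr (Filter.Eventually.of_forall fun z => ?_)
    simp [Complex.norm_exp, ← Complex.ofReal_pow]
  set C := max 1 ((n.factorial : ℝ) * ((a/2)⁻¹) ^ n) with hC
  refine Integrable.mono' (base.const_mul C) ?_ (Filter.Eventually.of_forall fun z => ?_)
  · exact ((continuous_norm.pow n).mul
      (Real.continuous_exp.comp (continuous_const.mul (continuous_norm.pow 2)))).aestronglyMeasurable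
  · have h0 : (0:ℝ) ≤ ‖z‖ := norm_nonneg _
    rw [Real.norm_eq_abs, _root_.abs_of_nonneg (by positivity : (0:ℝ) ≤ ‖z‖ ^ n * Real.exp (-a * ‖z‖ ^ 2))]
    have key := pow_le_exp_aux n h2 h0
    have : -a * ‖z‖ ^ 2 = (a/2) * ‖z‖ ^ 2 + (-(a/2) * ‖z‖ ^ 2) + (-(a) * ‖z‖ ^2) - (-(a/2) * ‖z‖ ^2) - (a/2)*‖z‖^2 := by ring
    have hsplit : Real.exp (-a * ‖z‖ ^ 2)
        = Real.exp (-(a/2) * ‖z‖ ^ 2) / Real.exp ((a/2) * ‖z‖ ^ 2) := by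
      rw [← Real.exp_sub]; ring_nf
    rw [hsplit, ← mul_div_assoc, div_le_iff₀ (Real.exp_pos _)]
    calc ‖z‖ ^ n * Real.exp (-(a / 2) * ‖z‖ ^ 2)
        ≤ (C * Real.exp ((a/2) * ‖z‖ ^ 2)) * Real.exp (-(a / 2) * ‖z‖ ^ 2) := by
          exact mul_le_mul_of_nonneg_right key (Real.exp_nonneg _)
      _ = C * Real.exp (-(a / 2) * ‖z‖ ^ 2) * Real.exp (a / 2 * ‖z‖ ^ 2) := by ring

-- angular integral
lemma theta_integral (k : ℤ) (hk : k ≠ 0) :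
    ∫ θ in Set.Ioo (-Real.pi) Real.pi, Complex.exp ((k : ℂ) * θ * Complex.I) = 0 := by
  have hle : -Real.pi ≤ Real.pi := by linarith [Real.pi_pos]
  rw [← integral_Ioc_eq_integral_Ioo, ← intervalIntegral.integral_of_le hle]
  have harg : ∀ θ : ℝ, (k : ℂ) * θ * Complex.I = ((k : ℂ) * Complex.I) * θ := by
    intro θ; ring
  simp_rw [harg]
  have hc : (k : ℂ) * Complex.I ≠ 0 := by
    simp [Complex.I_ne_zero, hk]
  rw [integral_exp_mul_complex hc]
  have h1 : (k : ℂ) * Complex.I * (Real.pi : ℂ) = (k : ℂ) * ((Real.pi : ℂ) * Complex.I) := by ring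
  have h2 : (k : ℂ) * Complex.I * ((-Real.pi : ℝ) : ℂ) = ((-k : ℤ) : ℂ) * ((Real.pi : ℂ) * Complex.I) := by
    push_cast; ring
  rw [h1, h2, Complex.exp_int_mul, Complex.exp_int_mul, Complex.exp_pi_mul_I]
  have : ((-1 : ℂ)) ^ (-k) = ((-1 : ℂ)) ^ k := by
    rw [zpow_neg]
    refine inv_eq_of_mul_eq_one_right ?_
    rw [← zpow_add₀ (by norm_num : (-1:ℂ) ≠ 0), show k + k = 2 * k by ring, zpow_mul]
    norm_num
  rw [this, sub_self, zero_div]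

lemma radial_integral (a : ℝ) (ha : 0 < a) (n : ℕ) :
    ∫ r in Set.Ioi (0:ℝ), r ^ (2 * n + 1) * Real.exp (-a * r ^ 2)
      = (n.factorial : ℝ) / (2 * a ^ (n + 1)) := by
  have h1 : ∀ r ∈ Set.Ioi (0:ℝ), r ^ (2 * n + 1) * Real.exp (-a * r ^ 2)
      = r ^ ((2 * n + 1 : ℕ) : ℝ) * Real.exp (-a * r ^ (2:ℝ)) := by
    intro r hr
    rw [Real.rpow_natCast, show (2:ℝ) = ((2:ℕ):ℝ) by norm_num, Real.rpow_natCast]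
  rw [setIntegral_congr_fun measurableSet_Ioi h1,
    _root_.integral_rpow_mul_exp_neg_mul_rpow (by norm_num)
      (lt_of_lt_of_le neg_one_lt_zero (by positivity)) ha]
  have h2 : (-(((2 * n + 1 : ℕ) : ℝ) + 1) / 2) = -(((n + 1 : ℕ)) : ℝ) := by push_cast; ring
  have h3 : ((((2 * n + 1 : ℕ) : ℝ)) + 1) / 2 = (n : ℝ) + 1 := by push_cast; ring
  rw [h2, h3, Real.Gamma_nat_eq_factorial, Real.rpow_neg ha.le, Real.rpow_natCast]
  have hA : (0:ℝ) < a ^ (n + 1) := by positivity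
  field_simp

lemma polar_pointwise (a : ℝ) (n m : ℕ) (p : ℝ × ℝ) (hr : 0 < p.1) :
    p.1 • ((Complex.polarCoord.symm p) ^ n * ((starRingEnd ℂ) (Complex.polarCoord.symm p)) ^ m *
        Complex.exp (-(a:ℂ) * ((‖Complex.polarCoord.symm p‖ : ℝ) : ℂ) ^ 2))
      = (((p.1 ^ (n + m + 1) * Real.exp (-a * p.1 ^ 2) : ℝ)) : ℂ) *
        Complex.exp ((((n : ℤ) - (m : ℤ) : ℤ) : ℂ) * (p.2 : ℂ) * Complex.I) := by
  have habs : ‖Complex.polarCoord.symm p‖ = p.1 := by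
    rw [Complex.norm_polarCoord_symm, abs_of_pos hr]
  have hsymm : Complex.polarCoord.symm p = (p.1 : ℂ) * Complex.exp ((p.2 : ℂ) * Complex.I) := by
    rw [Complex.polarCoord_symm_apply, Complex.exp_mul_I, Complex.ofReal_cos, Complex.ofReal_sin]
  have hconj : (starRingEnd ℂ) (Complex.polarCoord.symm p)
      = (p.1 : ℂ) * Complex.exp (-((p.2 : ℂ) * Complex.I)) := by
    rw [hsymm, map_mul, ← Complex.exp_conj]
    simp [Complex.conj_ofReal]
  have merge : Complex.exp ((n : ℂ) * ((p.2 : ℂ) * Complex.I)) *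
      Complex.exp ((m : ℂ) * (-((p.2 : ℂ) * Complex.I)))
      = Complex.exp ((((n : ℤ) - (m : ℤ) : ℤ) : ℂ) * (p.2 : ℂ) * Complex.I) := by
    rw [← Complex.exp_add]
    congr 1
    push_cast
    ring
  rw [habs, hconj, hsymm, Complex.real_smul, mul_pow, mul_pow,
    ← Complex.exp_nat_mul, ← Complex.exp_nat_mul, ← merge]
  push_cast
  ring

lemma gauss_moment (a : ℝ) (ha : 0 < a) (n m : ℕ) :
    (∫ z : ℂ, z ^ n * ((starRingEnd ℂ) z) ^ m *
        Complex.exp (-(a:ℂ) * ((‖z‖ : ℝ) : ℂ) ^ 2))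
      = if n = m then ((Real.pi * n.factorial / a ^ (n + 1) : ℝ) : ℂ) else 0 := by
  rw [← Complex.integral_comp_polarCoord_symm, polarCoord_target]
  have hmeas : MeasurableSet (Set.Ioi (0:ℝ) ×ˢ Set.Ioo (-Real.pi) Real.pi) :=
    measurableSet_Ioi.prod measurableSet_Ioo
  rw [setIntegral_congr_fun hmeas (fun p hp => polar_pointwise a n m p hp.1)]
  rw [MeasureTheory.Measure.volume_eq_prod, setIntegral_prod_mul
    (fun r : ℝ => (((r ^ (n + m + 1) * Real.exp (-a * r ^ 2) : ℝ)) : ℂ))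
    (fun θ : ℝ => Complex.exp ((((n : ℤ) - (m : ℤ) : ℤ) : ℂ) * (θ : ℂ) * Complex.I))]
  by_cases h : n = m
  · subst h
    have hth : (∫ θ in Set.Ioo (-Real.pi) Real.pi,
        Complex.exp ((((n : ℤ) - (n : ℤ) : ℤ) : ℂ) * (θ : ℂ) * Complex.I)) = ((2 * Real.pi : ℝ) : ℂ) := by
      simp only [sub_self, Int.cast_zero, zero_mul, Complex.exp_zero]
      rw [setIntegral_const, measureReal_def, Real.volume_Ioo, sub_neg_eq_add,
        ENNReal.toReal_ofReal (by linarith [Real.pi_pos] : (0:ℝ) ≤ Real.pi + Real.pi),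
        Complex.real_smul]
      push_cast; ring
    have hrad : (∫ r in Set.Ioi (0:ℝ), (((r ^ (n + n + 1) * Real.exp (-a * r ^ 2) : ℝ)) : ℂ))
        = (((n.factorial : ℝ) / (2 * a ^ (n + 1)) : ℝ) : ℂ) := by
      have hco : (∫ r in Set.Ioi (0:ℝ), (((r ^ (n + n + 1) * Real.exp (-a * r ^ 2) : ℝ)) : ℂ))
          = ((∫ r in Set.Ioi (0:ℝ), r ^ (n + n + 1) * Real.exp (-a * r ^ 2) : ℝ) : ℂ) :=
        integral_ofReal
      rw [hco]
      norm_cast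
      rw [show n + n + 1 = 2 * n + 1 by ring]
      exact radial_integral a ha n
    rw [hth, hrad, if_pos rfl]
    push_cast
    have : (a:ℂ) ^ (n+1) ≠ 0 := pow_ne_zero _ (by exact_mod_cast ha.ne')
    field_simp
  · rw [theta_integral ((n : ℤ) - (m : ℤ)) (by omega), mul_zero, if_neg h]
theorem stmt_12 (d : ℕ) (hd : 1 ≤ d) (a : ℝ) (ha : 0 < a)
    (ρ : ℂ → ℂ)
    (hρ : ρ = fun z : ℂ => Complex.exp (-(a : ℂ) * ((‖z‖ : ℝ) : ℂ) ^ 2))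
    (ε : ℂ) (hε : ε ^ d = -1)
    (s : ℕ → ℝ) (hs₁ : ∀ n < d, s n = (-1 : ℝ) ^ n) (hs₂ : ∀ n : ℕ, s (n + d) = -s n) :
    (CondI ρ ∧ CondII d ρ) ∧
    (∀ n m : ℕ, n ≠ m → genPairing d ε ρ (X ^ n) (X ^ m) = 0) ∧
    (∀ n : ℕ, genPairing d ε ρ (X ^ n) (X ^ n) =
      (s n : ℂ) * (Real.pi : ℂ) * (n.factorial : ℂ) / (a : ℂ) ^ (n + 1)) := by
  subst hρ
  have hε0 : ε ≠ 0 := by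
    intro h
    rw [h, zero_pow (by omega : d ≠ 0)] at hε
    exact absurd hε (by norm_num)
  have hnorm : ‖ε‖ = 1 := abs_eps d hd ε hε
  have hconjε : (starRingEnd ℂ) ε = ε⁻¹ := (Complex.inv_eq_conj hnorm).symm
  -- the pairing formula
  have hpair : ∀ n m : ℕ, genPairing d ε
      (fun z : ℂ => Complex.exp (-(a : ℂ) * ((‖z‖ : ℝ) : ℂ) ^ 2)) (X ^ n) (X ^ m)
      = ((starRingEnd ℂ) ((-ε) ^ (-(m % d : ℤ))) * ((starRingEnd ℂ) ε) ^ m) *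
        (if n = m then ((Real.pi * n.factorial / a ^ (n + 1) : ℝ) : ℂ) else 0) := by
    intro n m
    unfold genPairing sigmaMap weightComp
    have hint : ∀ z : ℂ, (X ^ n : ℂ[X]).eval z *
        (starRingEnd ℂ) (∑ ℓ ∈ Finset.range d, (-ε) ^ (-(ℓ : ℤ)) *
          ((∑ k ∈ (X ^ m : ℂ[X]).support.filter (fun k => k % d = ℓ),
            Polynomial.monomial k ((X ^ m : ℂ[X]).coeff k)).eval (ε * z))) *
        Complex.exp (-(a : ℂ) * ((‖z‖ : ℝ) : ℂ) ^ 2)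
        = ((starRingEnd ℂ) ((-ε) ^ (-(m % d : ℤ))) * ((starRingEnd ℂ) ε) ^ m) *
          (z ^ n * ((starRingEnd ℂ) z) ^ m *
            Complex.exp (-(a : ℂ) * ((‖z‖ : ℝ) : ℂ) ^ 2)) := by
      intro z
      rw [sigmaMap_X_pow' d hd ε m z, Polynomial.eval_pow, Polynomial.eval_X, map_mul, map_pow,
        map_mul]
      ring
    rw [show (fun z : ℂ => (X ^ n : ℂ[X]).eval z *
        (starRingEnd ℂ) (∑ ℓ ∈ Finset.range d, (-ε) ^ (-(ℓ : ℤ)) *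
          ((∑ k ∈ (X ^ m : ℂ[X]).support.filter (fun k => k % d = ℓ),
            Polynomial.monomial k ((X ^ m : ℂ[X]).coeff k)).eval (ε * z))) *
        Complex.exp (-(a : ℂ) * ((‖z‖ : ℝ) : ℂ) ^ 2))
        = fun z : ℂ => ((starRingEnd ℂ) ((-ε) ^ (-(m % d : ℤ))) * ((starRingEnd ℂ) ε) ^ m) *
          (z ^ n * ((starRingEnd ℂ) z) ^ m *
            Complex.exp (-(a : ℂ) * ((‖z‖ : ℝ) : ℂ) ^ 2)) from funext hint,
      MeasureTheory.integral_const_mul, gauss_moment a ha n m]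
  refine ⟨⟨⟨?_, ?_⟩, ?_⟩, ?_, ?_⟩
  · -- measurable
    exact (Complex.continuous_exp.comp (continuous_const.mul
      ((Complex.continuous_ofReal.comp continuous_norm).pow 2))).measurable
  · -- integrability
    intro n
    refine (gauss_integrable a ha n).congr (Filter.Eventually.of_forall fun z => ?_)
    simp [Complex.norm_exp, ← Complex.ofReal_pow]
  · -- CondII
    intro ε' hε' z
    have h1 : ‖ε'‖ = 1 := abs_eps d hd ε' hε'
    simp only
    rw [show ‖ε' * z‖ = ‖z‖ by rw [norm_mul, h1, one_mul],
      ← Complex.exp_conj]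
    congr 1
    simp [Complex.conj_ofReal]
  · -- orthogonality
    intro n m hnm
    rw [hpair n m, if_neg hnm, mul_zero]
  · -- diagonal
    intro n
    rw [hpair n n, if_pos rfl]
    have hc : (starRingEnd ℂ) ((-ε) ^ (-(n % d : ℤ))) * ((starRingEnd ℂ) ε) ^ n
        = ((s n : ℝ) : ℂ) := by
      have hsn : s n = (-1 : ℝ) ^ (n % d) * (-1) ^ (n / d) := s_eq d hd s hs₁ hs₂ n
      have hεr : ε ^ (n % d) ≠ 0 := pow_ne_zero _ hε0
      have hεn : ε ^ n = ((-1 : ℂ) ^ (n / d)) * ε ^ (n % d) := by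
        conv_lhs => rw [show n = d * (n / d) + n % d from (Nat.div_add_mod n d).symm]
        rw [pow_add, pow_mul, hε]
      have hmod : ((n : ℤ) % (d : ℤ)) = ((n % d : ℕ) : ℤ) := by norm_cast
      have h1 : (-ε) ^ (-(n % d : ℤ)) = (((-ε) ^ (n % d) : ℂ))⁻¹ := by
        rw [hmod, zpow_neg, zpow_natCast]
      rw [h1, map_inv₀, map_pow, map_neg, hconjε, inv_pow, hεn, hsn]
      rw [neg_pow, inv_pow, mul_inv, inv_inv, mul_inv]
      have k1 : (((-1 : ℂ) ^ (n % d))⁻¹ : ℂ) = (-1) ^ (n % d) := by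
        rw [← inv_pow]; norm_num
      have k2 : (((-1 : ℂ) ^ (n / d))⁻¹ : ℂ) = (-1) ^ (n / d) := by
        rw [← inv_pow]; norm_num
      rw [k1, k2]
      push_cast
      field_simp
    rw [hc]
    push_cast
    ring
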